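/- Let p, q ∈ L¹([0,π];ℝ), let Ω(x) be the 2×2 matrix with rows (p(x), q(x)) and (q(x), −p(x)), let α ∈ (−π/2, π/2], t ∈ ℝ, μ ∈ ℝ. Let h : [0,π] → ℝ² be absolutely continuous with B h'(x) + Ω(x) h(x) = μ h(x) a.e., h₁(0)cos α + h₂(0)sin α = 0, and ∫₀^π |h(s)|² ds = 1. Define θ(x) = 1 + (e^t − 1)∫₀^x |h(s)|² ds and Ω_t(x) = Ω(x) + ((e^t − 1)/θ(x))·(B h(x)h(x)* − h(x)h(x)* B). Let λ ∈ ℝ and let y : [0,π] → ℝ² be absolutely continuous with B y'(x) + Ω(x) y(x) = λ y(x) a.e. and y₁(0)cos α + y₂(0)sin α = 0. Then the function ỹ(x) = y(x) − ((e^t − 1) ∫₀^x h(s)*y(s) ds / θ(x)) · h(x) is absolutely continuous and satisfies B ỹ'(x) + Ω_t(x) ỹ(x) = λ ỹ(x) a.e. on [0,π]; moreover ỹ(0) = y(0), and if in addition y₁(π) = 0 and h₁(π) = 0, then ỹ₁(π) = 0. -/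

import Mathlib

open MeasureTheory Real Set

noncomputable section

/-- The matrix `B` of the canonical Dirac system. -/
def Bmat : Matrix (Fin 2) (Fin 2) ℝ := !![0, 1; -1, 0]

/-- The canonical potential matrix `Ω(x)` built from `p` and `q`. -/
def Omat (p q : ℝ → ℝ) (x : ℝ) : Matrix (Fin 2) (Fin 2) ℝ := !![p x, q x; q x, -(p x)]

/-- `θ(x) = 1 + (e^t - 1) ∫₀ˣ |h(s)|² ds`. -/
def theta (t : ℝ) (h : ℝ → Fin 2 → ℝ) (x : ℝ) : ℝ :=
  1 + (Real.exp t - 1) * ∫ s in (0:ℝ)..x, ((h s 0) ^ 2 + (h s 1) ^ 2)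

/-- The transformed potential
`Ω_t(x) = Ω(x) + ((e^t - 1)/θ(x)) (B h(x)h(x)* - h(x)h(x)* B)`. -/
def OmatT (p q : ℝ → ℝ) (t : ℝ) (h : ℝ → Fin 2 → ℝ) (x : ℝ) : Matrix (Fin 2) (Fin 2) ℝ :=
  Omat p q x + ((Real.exp t - 1) / theta t h x) •
    (Bmat * Matrix.vecMulVec (h x) (h x) - Matrix.vecMulVec (h x) (h x) * Bmat)

/-- `ỹ(x) = y(x) - ((e^t - 1) ∫₀ˣ h(s)*y(s) ds / θ(x)) h(x)`. -/
def ytil (t : ℝ) (h y : ℝ → Fin 2 → ℝ) (x : ℝ) : Fin 2 → ℝ :=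
  y x - ((Real.exp t - 1) * (∫ s in (0:ℝ)..x, (h s 0 * y s 0 + h s 1 * y s 1)) /
    theta t h x) • h x

set_option linter.unnecessarySeqFocus false
set_option linter.unusedVariables false

lemma aux_II {f : ℝ → ℝ} (hf : IntegrableOn f (Icc (0:ℝ) π)) {x : ℝ}
    (hx : x ∈ Icc (0:ℝ) π) : IntervalIntegrable f volume 0 x := by
  apply IntegrableOn.intervalIntegrable
  rw [uIcc_of_le hx.1]
  exact hf.mono_set (Icc_subset_Icc le_rfl hx.2)

lemma aux_fubini {f g : ℝ → ℝ} (hf : IntegrableOn f (Icc (0:ℝ) π))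
    (hg : IntegrableOn g (Icc (0:ℝ) π)) {x : ℝ} (hx : x ∈ Icc (0:ℝ) π) :
    IntegrableOn (fun s => f s * (∫ r in (0:ℝ)..s, g r) + (∫ r in (0:ℝ)..s, f r) * g s)
      (Ioc 0 x) ∧
    (∫ s in (0:ℝ)..x, (f s * (∫ r in (0:ℝ)..s, g r) + (∫ r in (0:ℝ)..s, f r) * g s))
      = (∫ s in (0:ℝ)..x, f s) * (∫ s in (0:ℝ)..x, g s) := by
  have hsub : Ioc (0:ℝ) x ⊆ Icc 0 π := Ioc_subset_Icc_self.trans (Icc_subset_Icc le_rfl hx.2)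
  have hfx : IntegrableOn f (Ioc 0 x) := hf.mono_set hsub
  have hgx : IntegrableOn g (Ioc 0 x) := hg.mono_set hsub
  set ν := volume.restrict (Ioc (0:ℝ) x) with hν
  set φ : ℝ × ℝ → ℝ := fun q => if q.2 ≤ q.1 then f q.1 * g q.2 else 0 with hφ
  set ψ : ℝ × ℝ → ℝ := fun q => if q.2 ≤ q.1 then f q.2 * g q.1 else 0 with hψ
  have hmeas_set : MeasurableSet {q : ℝ × ℝ | q.2 ≤ q.1} :=
    measurableSet_le measurable_snd measurable_fst
  have hφm : AEStronglyMeasurable φ (ν.prod ν) := by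
    have h1 : φ = {q : ℝ × ℝ | q.2 ≤ q.1}.indicator (fun q => f q.1 * g q.2) := by
      funext q; by_cases h : q.2 ≤ q.1 <;> simp [hφ, Set.indicator, h]
    rw [h1]
    exact ((hfx.aestronglyMeasurable.comp_fst).mul (hgx.aestronglyMeasurable.comp_snd)).indicator hmeas_set
  have hψm : AEStronglyMeasurable ψ (ν.prod ν) := by
    have h1 : ψ = {q : ℝ × ℝ | q.2 ≤ q.1}.indicator (fun q => f q.2 * g q.1) := by
      funext q; by_cases h : q.2 ≤ q.1 <;> simp [hψ, Set.indicator, h]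
    rw [h1]
    exact ((hfx.aestronglyMeasurable.comp_snd).mul (hgx.aestronglyMeasurable.comp_fst)).indicator hmeas_set
  have hprod : Integrable (fun q : ℝ × ℝ => f q.1 * g q.2) (ν.prod ν) := hfx.mul_prod hgx
  have hprod' : Integrable (fun q : ℝ × ℝ => f q.2 * g q.1) (ν.prod ν) := by
    have := hgx.mul_prod hfx
    exact this.congr (Filter.Eventually.of_forall fun q => mul_comm _ _)
  have hφi : Integrable φ (ν.prod ν) := by
    refine hprod.norm.mono' hφm (Filter.Eventually.of_forall fun q => ?_)
    by_cases h : q.2 ≤ q.1 <;> simp [hφ, h] <;> positivity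
  have hψi : Integrable ψ (ν.prod ν) := by
    refine hprod'.norm.mono' hψm (Filter.Eventually.of_forall fun q => ?_)
    by_cases h : q.2 ≤ q.1 <;> simp [hψ, h] <;> positivity
  have key1 : ∀ s ∈ Ioc (0:ℝ) x, (∫ r, φ (s, r) ∂ν) = f s * ∫ r in (0:ℝ)..s, g r := by
    intro s hs
    have h1 : (fun r => φ (s, r)) = (Iic s).indicator (fun r => f s * g r) := by
      funext r; by_cases h : r ≤ s <;> simp [hφ, Set.indicator, h]
    have h2 : Iic s ∩ Ioc 0 x = Ioc 0 s := by
      ext r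
      simp only [mem_inter_iff, mem_Iic, mem_Ioc]
      exact ⟨fun ⟨a, b, _⟩ => ⟨b, a⟩, fun ⟨a, b⟩ => ⟨b, a, b.trans hs.2⟩⟩
    rw [h1, integral_indicator measurableSet_Iic, hν, Measure.restrict_restrict measurableSet_Iic,
      h2, intervalIntegral.integral_of_le hs.1.le, integral_const_mul]
  have key1' : ∀ s ∈ Ioc (0:ℝ) x, (∫ r, ψ (s, r) ∂ν) = (∫ r in (0:ℝ)..s, f r) * g s := by
    intro s hs
    have h1 : (fun r => ψ (s, r)) = (Iic s).indicator (fun r => f r * g s) := by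
      funext r; by_cases h : r ≤ s <;> simp [hψ, Set.indicator, h]
    have h2 : Iic s ∩ Ioc 0 x = Ioc 0 s := by
      ext r
      simp only [mem_inter_iff, mem_Iic, mem_Ioc]
      exact ⟨fun ⟨a, b, _⟩ => ⟨b, a⟩, fun ⟨a, b⟩ => ⟨b, a, b.trans hs.2⟩⟩
    rw [h1, integral_indicator measurableSet_Iic, hν, Measure.restrict_restrict measurableSet_Iic,
      h2, intervalIntegral.integral_of_le hs.1.le, integral_mul_const]
  have key2 : ∀ r ∈ Ioc (0:ℝ) x, (∫ s, φ (s, r) ∂ν)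
      = ((∫ s in (0:ℝ)..x, f s) - (∫ s in (0:ℝ)..r, f s)) * g r := by
    intro r hr
    have h1 : (fun s => φ (s, r)) = (Ici r).indicator (fun s => f s * g r) := by
      funext s; by_cases h : r ≤ s <;> simp [hφ, Set.indicator, h]
    have h2 : Ici r ∩ Ioc 0 x = Icc r x := by
      ext s
      simp only [mem_inter_iff, mem_Ici, mem_Ioc, mem_Icc]
      exact ⟨fun ⟨a, _, b⟩ => ⟨a, b⟩, fun ⟨a, b⟩ => ⟨a, hr.1.trans_le a, b⟩⟩
    rw [h1, integral_indicator measurableSet_Ici, hν, Measure.restrict_restrict measurableSet_Ici,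
      h2, integral_Icc_eq_integral_Ioc, integral_mul_const,
      ← intervalIntegral.integral_of_le hr.2]
    congr 1
    rw [← intervalIntegral.integral_interval_sub_left (aux_II hf hx)
      (aux_II hf ⟨hr.1.le, hr.2.trans hx.2⟩)]
  have hswap : ∫ s, (∫ r, φ (s, r) ∂ν) ∂ν = ∫ r, (∫ s, φ (s, r) ∂ν) ∂ν :=
    integral_integral_swap (by exact hφi)
  have I1 : Integrable (fun s => f s * ∫ r in (0:ℝ)..s, g r) ν := by
    refine (hφi.integral_prod_left).congr ?_
    filter_upwards [ae_restrict_mem measurableSet_Ioc] with s hs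
    exact key1 s hs
  have I2 : Integrable (fun s => (∫ r in (0:ℝ)..s, f r) * g s) ν := by
    refine (hψi.integral_prod_left).congr ?_
    filter_upwards [ae_restrict_mem measurableSet_Ioc] with s hs
    exact key1' s hs
  refine ⟨I1.add I2, ?_⟩
  rw [intervalIntegral.integral_of_le hx.1]
  have e1 : ∫ s, f s * (∫ r in (0:ℝ)..s, g r) ∂ν
      = ((∫ s in (0:ℝ)..x, f s) * (∫ s in (0:ℝ)..x, g s))
        - ∫ s, (∫ r in (0:ℝ)..s, f r) * g s ∂ν := by
    have a1 : ∫ s, f s * (∫ r in (0:ℝ)..s, g r) ∂ν = ∫ s, (∫ r, φ (s, r) ∂ν) ∂ν := by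
      refine integral_congr_ae ?_
      filter_upwards [ae_restrict_mem measurableSet_Ioc] with s hs
      exact (key1 s hs).symm
    have a2 : ∫ r, (∫ s, φ (s, r) ∂ν) ∂ν
        = ∫ r, (((∫ s in (0:ℝ)..x, f s) - (∫ s in (0:ℝ)..r, f s)) * g r) ∂ν := by
      refine integral_congr_ae ?_
      filter_upwards [ae_restrict_mem measurableSet_Ioc] with r hr
      exact key2 r hr
    have a3 : ∫ r, (((∫ s in (0:ℝ)..x, f s) - (∫ s in (0:ℝ)..r, f s)) * g r) ∂ν
        = ((∫ s in (0:ℝ)..x, f s) * (∫ s in (0:ℝ)..x, g s))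
          - ∫ s, (∫ r in (0:ℝ)..s, f r) * g s ∂ν := by
      have b1 : (fun r => ((∫ s in (0:ℝ)..x, f s) - (∫ s in (0:ℝ)..r, f s)) * g r)
          = fun r => (∫ s in (0:ℝ)..x, f s) * g r - (∫ s in (0:ℝ)..r, f s) * g r := by
        funext r; ring
      rw [b1, integral_sub (hgx.const_mul _) I2, integral_const_mul,
        ← intervalIntegral.integral_of_le hx.1]
    rw [a1, hswap, a2, a3]
  rw [integral_add I1 I2, e1]
  ring

lemma aux_prodFTC {f g f' g' : ℝ → ℝ} (hf' : IntegrableOn f' (Icc (0:ℝ) π))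
    (hg' : IntegrableOn g' (Icc (0:ℝ) π))
    (hf : ∀ x ∈ Icc (0:ℝ) π, f x = f 0 + ∫ s in (0:ℝ)..x, f' s)
    (hg : ∀ x ∈ Icc (0:ℝ) π, g x = g 0 + ∫ s in (0:ℝ)..x, g' s)
    {x : ℝ} (hx : x ∈ Icc (0:ℝ) π) :
    f x * g x = f 0 * g 0 + ∫ s in (0:ℝ)..x, (f' s * g s + f s * g' s) := by
  obtain ⟨hint, heq⟩ := aux_fubini hf' hg' hx
  have hcongr : EqOn (fun s => f' s * g s + f s * g' s)
      (fun s => (f' s * g 0 + f 0 * g' s)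
        + (f' s * (∫ r in (0:ℝ)..s, g' r) + (∫ r in (0:ℝ)..s, f' r) * g' s)) (uIcc 0 x) := by
    intro s hs
    rw [uIcc_of_le hx.1] at hs
    have hs' : s ∈ Icc (0:ℝ) π := ⟨hs.1, hs.2.trans hx.2⟩
    simp only
    rw [hf s hs', hg s hs']
    ring
  rw [intervalIntegral.integral_congr hcongr]
  have hII1 : IntervalIntegrable (fun s => f' s * g 0 + f 0 * g' s) volume 0 x := by
    exact ((aux_II hf' hx).mul_const _).add ((aux_II hg' hx).const_mul _)
  have hII2 : IntervalIntegrable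
      (fun s => f' s * (∫ r in (0:ℝ)..s, g' r) + (∫ r in (0:ℝ)..s, f' r) * g' s) volume 0 x := by
    rw [intervalIntegrable_iff_integrableOn_Ioc_of_le hx.1]
    exact hint
  rw [intervalIntegral.integral_add hII1 hII2, heq,
    intervalIntegral.integral_add ((aux_II hf' hx).mul_const _) ((aux_II hg' hx).const_mul _),
    intervalIntegral.integral_mul_const, intervalIntegral.integral_const_mul]
  rw [hf x hx, hg x hx]
  ring

lemma aux_hasDerivAt {f : ℝ → ℝ} (hf : IntegrableOn f (Icc (0:ℝ) π))
    (hc : ContinuousOn f (Icc (0:ℝ) π)) {s : ℝ} (hs : s ∈ Ioo (0:ℝ) π) :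
    HasDerivAt (fun u => ∫ r in (0:ℝ)..u, f r) (f s) s := by
  have hmem : Icc (0:ℝ) π ∈ nhds s := Icc_mem_nhds hs.1 hs.2
  exact intervalIntegral.integral_hasDerivAt_right (aux_II hf ⟨hs.1.le, hs.2.le⟩)
    ⟨Icc (0:ℝ) π, hmem, hf.aestronglyMeasurable⟩
    ((hc s ⟨hs.1.le, hs.2.le⟩).continuousAt hmem)

lemma aux_contPrim {f : ℝ → ℝ} (hf : IntegrableOn f (Icc (0:ℝ) π)) :
    ContinuousOn (fun u => ∫ r in (0:ℝ)..u, f r) (Icc (0:ℝ) π) := by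
  have := intervalIntegral.continuousOn_primitive_interval
    (a := (0:ℝ)) (b := π) (μ := volume) (f := f) (by rwa [uIcc_of_le pi_nonneg])
  rwa [uIcc_of_le pi_nonneg] at this

lemma aux_mulInt {f g : ℝ → ℝ} (hf : IntegrableOn f (Icc (0:ℝ) π))
    (hg : ContinuousOn g (Icc (0:ℝ) π)) :
    IntegrableOn (fun s => f s * g s) (Icc (0:ℝ) π) :=
  hf.mul_continuousOn hg isCompact_Icc

private def Gf (h y : ℝ → Fin 2 → ℝ) (u : ℝ) : ℝ :=
  ∫ s in (0:ℝ)..u, (h s 0 * y s 0 + h s 1 * y s 1)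

private def Ff (t : ℝ) (h y : ℝ → Fin 2 → ℝ) (u : ℝ) : ℝ :=
  (Real.exp t - 1) * Gf h y u / theta t h u

private def Df (t : ℝ) (h y : ℝ → Fin 2 → ℝ) (u : ℝ) : ℝ :=
  (Real.exp t - 1) * (h u 0 * y u 0 + h u 1 * y u 1) / theta t h u
    - Ff t h y u * ((Real.exp t - 1) * ((h u 0) ^ 2 + (h u 1) ^ 2) / theta t h u)

private def zf (t : ℝ) (h h' y y' : ℝ → Fin 2 → ℝ) (u : ℝ) : Fin 2 → ℝ :=
  y' u - (Df t h y u • h u + Ff t h y u • h' u)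

private lemma ytil_eq (t : ℝ) (h y : ℝ → Fin 2 → ℝ) (x : ℝ) (i : Fin 2) :
    ytil t h y x i = y x i - Ff t h y x * h x i := by
  simp [ytil, Ff, Gf, Pi.sub_apply, Pi.smul_apply, smul_eq_mul]

/-- Analytic core of Theorem 1.2: the Darboux-type transformation built from a
normalized eigenfunction `h` of `L(Ω,α)` maps solutions of the `Ω`-system satisfying
the boundary condition at `0` to solutions of the transformed `Ω_t`-system with the
same spectral parameter, preserving both boundary conditions. -/
theorem stmt_2 (p q : ℝ → ℝ)
    (hp : IntegrableOn p (Icc (0:ℝ) π)) (hq : IntegrableOn q (Icc (0:ℝ) π))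
    (α : ℝ) (hα : α ∈ Ioc (-(π / 2)) (π / 2))
    (t mu lam : ℝ)
    (h h' : ℝ → Fin 2 → ℝ)
    -- h is absolutely continuous on [0,π] with integrable derivative h':
    (hh'int : IntegrableOn h' (Icc (0:ℝ) π))
    (hhAC : ∀ x ∈ Icc (0:ℝ) π, ∀ i : Fin 2, h x i = h 0 i + ∫ s in (0:ℝ)..x, h' s i)
    -- B h' + Ω h = μ h a.e. on [0,π]:
    (hhode : ∀ᵐ x ∂(volume.restrict (Icc (0:ℝ) π)),
      Bmat.mulVec (h' x) + (Omat p q x).mulVec (h x) = mu • h x)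
    -- boundary condition at 0 and normalization:
    (hhbc : h 0 0 * Real.cos α + h 0 1 * Real.sin α = 0)
    (hhnorm : (∫ s in (0:ℝ)..π, ((h s 0) ^ 2 + (h s 1) ^ 2)) = 1)
    (y y' : ℝ → Fin 2 → ℝ)
    -- y is absolutely continuous on [0,π] with integrable derivative y':
    (hy'int : IntegrableOn y' (Icc (0:ℝ) π))
    (hyAC : ∀ x ∈ Icc (0:ℝ) π, ∀ i : Fin 2, y x i = y 0 i + ∫ s in (0:ℝ)..x, y' s i)
    -- B y' + Ω y = λ y a.e. on [0,π]:
    (hyode : ∀ᵐ x ∂(volume.restrict (Icc (0:ℝ) π)),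
      Bmat.mulVec (y' x) + (Omat p q x).mulVec (y x) = lam • y x)
    (hybc : y 0 0 * Real.cos α + y 0 1 * Real.sin α = 0) :
    -- ỹ is absolutely continuous and solves B ỹ' + Ω_t ỹ = λ ỹ a.e. on [0,π]:
    (∃ z : ℝ → Fin 2 → ℝ, IntegrableOn z (Icc (0:ℝ) π) ∧
      (∀ x ∈ Icc (0:ℝ) π, ∀ i : Fin 2,
        ytil t h y x i = ytil t h y 0 i + ∫ s in (0:ℝ)..x, z s i) ∧
      (∀ᵐ x ∂(volume.restrict (Icc (0:ℝ) π)),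
        Bmat.mulVec (z x) + (OmatT p q t h x).mulVec (ytil t h y x) = lam • ytil t h y x)) ∧
    -- ỹ(0) = y(0):
    ytil t h y 0 = y 0 ∧
    -- preservation of the boundary condition at π:
    (y π 0 = 0 → h π 0 = 0 → ytil t h y π 0 = 0) := by
  have hπ : (0:ℝ) ≤ π := pi_nonneg
  -- component integrability and continuity
  have hI : ∀ i : Fin 2, IntegrableOn (fun x => h' x i) (Icc (0:ℝ) π) := fun i =>
    (ContinuousLinearMap.proj (R := ℝ) (φ := fun _ : Fin 2 => ℝ) i).integrable_comp hh'int
  have hJ : ∀ i : Fin 2, IntegrableOn (fun x => y' x i) (Icc (0:ℝ) π) := fun i =>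
    (ContinuousLinearMap.proj (R := ℝ) (φ := fun _ : Fin 2 => ℝ) i).integrable_comp hy'int
  have hhc : ∀ i : Fin 2, ContinuousOn (fun x => h x i) (Icc (0:ℝ) π) := fun i =>
    ContinuousOn.congr (continuousOn_const.add (aux_contPrim (hI i))) (fun x hx => hhAC x hx i)
  have hyc : ∀ i : Fin 2, ContinuousOn (fun x => y x i) (Icc (0:ℝ) π) := fun i =>
    ContinuousOn.congr (continuousOn_const.add (aux_contPrim (hJ i))) (fun x hx => hyAC x hx i)
  have hnsqc : ContinuousOn (fun s => (h s 0) ^ 2 + (h s 1) ^ 2) (Icc (0:ℝ) π) :=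
    (((hhc 0).pow 2).add ((hhc 1).pow 2))
  have hnsqi : IntegrableOn (fun s => (h s 0) ^ 2 + (h s 1) ^ 2) (Icc (0:ℝ) π) :=
    hnsqc.integrableOn_Icc
  have hhy2c : ContinuousOn (fun s => h s 0 * y s 0 + h s 1 * y s 1) (Icc (0:ℝ) π) :=
    ((hhc 0).mul (hyc 0)).add ((hhc 1).mul (hyc 1))
  have hhy2i : IntegrableOn (fun s => h s 0 * y s 0 + h s 1 * y s 1) (Icc (0:ℝ) π) :=
    hhy2c.integrableOn_Icc
  -- positivity of theta
  have hθpos : ∀ x ∈ Icc (0:ℝ) π, 0 < theta t h x := by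
    intro x hx
    have h0 : 0 ≤ ∫ s in (0:ℝ)..x, ((h s 0) ^ 2 + (h s 1) ^ 2) :=
      intervalIntegral.integral_nonneg hx.1 (fun s _ => by positivity)
    have h1 : (∫ s in (0:ℝ)..x, ((h s 0) ^ 2 + (h s 1) ^ 2)) ≤ 1 := by
      rw [← hhnorm]
      have hi2 : IntervalIntegrable (fun s => (h s 0) ^ 2 + (h s 1) ^ 2) volume x π := by
        apply IntegrableOn.intervalIntegrable
        rw [uIcc_of_le hx.2]
        exact hnsqi.mono_set (Icc_subset_Icc hx.1 le_rfl)
      have hsplit := intervalIntegral.integral_add_adjacent_intervals (aux_II hnsqi hx) hi2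
      have hnn : 0 ≤ ∫ s in x..π, ((h s 0) ^ 2 + (h s 1) ^ 2) :=
        intervalIntegral.integral_nonneg hx.2 (fun s _ => by positivity)
      linarith
    have he := Real.exp_pos t
    rcases le_or_gt 0 (Real.exp t - 1) with hc0 | hc0
    · have := mul_nonneg hc0 h0
      simp only [theta]; nlinarith
    · have := mul_nonneg (neg_nonneg.mpr hc0.le) (sub_nonneg.mpr h1)
      simp only [theta]; nlinarith
  have hθne : ∀ x ∈ Icc (0:ℝ) π, theta t h x ≠ 0 := fun x hx => (hθpos x hx).ne'
  -- continuity of theta, G, F, D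
  have hθc : ContinuousOn (fun u => theta t h u) (Icc (0:ℝ) π) := by
    exact continuousOn_const.add (continuousOn_const.mul (aux_contPrim hnsqi))
  have hGc : ContinuousOn (Gf h y) (Icc (0:ℝ) π) := aux_contPrim hhy2i
  have hFc : ContinuousOn (Ff t h y) (Icc (0:ℝ) π) :=
    (continuousOn_const.mul hGc).div hθc hθne
  have hDc : ContinuousOn (Df t h y) (Icc (0:ℝ) π) :=
    ((continuousOn_const.mul hhy2c).div hθc hθne).sub
      (hFc.mul ((continuousOn_const.mul hnsqc).div hθc hθne))
  have hDi : IntegrableOn (Df t h y) (Icc (0:ℝ) π) := hDc.integrableOn_Icc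
  -- FTC for F
  have hFderiv : ∀ s ∈ Ioo (0:ℝ) π, HasDerivAt (Ff t h y) (Df t h y s) s := by
    intro s hs
    have hsI : s ∈ Icc (0:ℝ) π := ⟨hs.1.le, hs.2.le⟩
    have hG' : HasDerivAt (Gf h y) (h s 0 * y s 0 + h s 1 * y s 1) s :=
      aux_hasDerivAt hhy2i hhy2c hs
    have hN' : HasDerivAt (fun u => theta t h u)
        ((Real.exp t - 1) * ((h s 0) ^ 2 + (h s 1) ^ 2)) s :=
      ((aux_hasDerivAt hnsqi hnsqc hs).const_mul _).const_add 1
    have hne : theta t h s ≠ 0 := hθne s hsI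
    have hd : HasDerivAt (Ff t h y) _ s := (hG'.const_mul (Real.exp t - 1)).div hN' hne
    convert hd using 1
    simp only [Df, Ff]
    field_simp
  have hFFTC : ∀ x ∈ Icc (0:ℝ) π, Ff t h y x = Ff t h y 0 + ∫ s in (0:ℝ)..x, Df t h y s := by
    intro x hx
    have hs := intervalIntegral.integral_eq_sub_of_hasDeriv_right_of_le hx.1
      (hFc.mono (Icc_subset_Icc le_rfl hx.2))
      (fun s hs => (hFderiv s ⟨hs.1, lt_of_lt_of_le hs.2 hx.2⟩).hasDerivWithinAt)
      (aux_II hDi hx)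
    linarith
  have hF0 : Ff t h y 0 = 0 := by
    simp [Ff, Gf, intervalIntegral.integral_same]
  -- componentwise ODEs
  have ode_h : ∀ᵐ x ∂(volume.restrict (Icc (0:ℝ) π)),
      (h' x 1 = mu * h x 0 - p x * h x 0 - q x * h x 1) ∧
      (h' x 0 = q x * h x 0 - p x * h x 1 - mu * h x 1) := by
    filter_upwards [hhode] with x hx
    have h0 := congrFun hx 0
    have h1 := congrFun hx 1
    simp [Bmat, Omat, Matrix.mulVec, dotProduct, Fin.sum_univ_two,
      Pi.add_apply, Pi.smul_apply, smul_eq_mul] at h0 h1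
    constructor <;> linarith
  have ode_y : ∀ᵐ x ∂(volume.restrict (Icc (0:ℝ) π)),
      (y' x 1 = lam * y x 0 - p x * y x 0 - q x * y x 1) ∧
      (y' x 0 = q x * y x 0 - p x * y x 1 - lam * y x 1) := by
    filter_upwards [hyode] with x hx
    have h0 := congrFun hx 0
    have h1 := congrFun hx 1
    simp [Bmat, Omat, Matrix.mulVec, dotProduct, Fin.sum_univ_two,
      Pi.add_apply, Pi.smul_apply, smul_eq_mul] at h0 h1
    constructor <;> linarith
  -- the Wronskian-type identity
  have hW0 : h 0 0 * y 0 1 - h 0 1 * y 0 0 = 0 := by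
    linear_combination (Real.sin α * h 0 0 - Real.cos α * h 0 1) * hybc
      + (Real.cos α * y 0 1 - Real.sin α * y 0 0) * hhbc
      - (h 0 0 * y 0 1 - h 0 1 * y 0 0) * (sin_sq_add_cos_sq α)
  have hWd : ∀ x ∈ Icc (0:ℝ) π, h x 0 * y x 1 - h x 1 * y x 0 = (lam - mu) * Gf h y x := by
    intro x hx
    have e1 := aux_prodFTC (f := fun u => h u 0) (g := fun u => y u 1)
      (f' := fun u => h' u 0) (g' := fun u => y' u 1) (hI 0) (hJ 1)
      (fun u hu => hhAC u hu 0) (fun u hu => hyAC u hu 1) hx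
    have e2 := aux_prodFTC (f := fun u => h u 1) (g := fun u => y u 0)
      (f' := fun u => h' u 1) (g' := fun u => y' u 0) (hI 1) (hJ 0)
      (fun u hu => hhAC u hu 1) (fun u hu => hyAC u hu 0) hx
    have i1 : IntegrableOn (fun s => h' s 0 * y s 1 + h s 0 * y' s 1) (Icc (0:ℝ) π) :=
      (aux_mulInt (hI 0) (hyc 1)).add (IntegrableOn.continuousOn_mul (hhc 0) (hJ 1) isCompact_Icc)
    have i2 : IntegrableOn (fun s => h' s 1 * y s 0 + h s 1 * y' s 0) (Icc (0:ℝ) π) :=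
      (aux_mulInt (hI 1) (hyc 0)).add (IntegrableOn.continuousOn_mul (hhc 1) (hJ 0) isCompact_Icc)
    have estep : h x 0 * y x 1 - h x 1 * y x 0 = ∫ s in (0:ℝ)..x,
        ((h' s 0 * y s 1 + h s 0 * y' s 1) - (h' s 1 * y s 0 + h s 1 * y' s 0)) := by
      rw [intervalIntegral.integral_sub (aux_II i1 hx) (aux_II i2 hx), e1, e2]
      linear_combination hW0
    have hcongr : ∀ᵐ s ∂volume, s ∈ Set.uIoc (0:ℝ) x →
        ((h' s 0 * y s 1 + h s 0 * y' s 1) - (h' s 1 * y s 0 + h s 1 * y' s 0))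
          = (lam - mu) * (h s 0 * y s 0 + h s 1 * y s 1) := by
      have h1 := (ae_restrict_iff' measurableSet_Icc).mp ode_h
      have h2 := (ae_restrict_iff' measurableSet_Icc).mp ode_y
      filter_upwards [h1, h2] with s hs1 hs2 hmem
      rw [uIoc_of_le hx.1] at hmem
      have hsI : s ∈ Icc (0:ℝ) π := ⟨hmem.1.le, hmem.2.trans hx.2⟩
      obtain ⟨eh1, eh0⟩ := hs1 hsI
      obtain ⟨ey1, ey0⟩ := hs2 hsI
      rw [eh1, eh0, ey1, ey0]
      ring
    rw [estep, intervalIntegral.integral_congr_ae hcongr, Gf,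
      intervalIntegral.integral_const_mul]
  -- continuity of h, y as pi-valued functions
  have hhcp : ContinuousOn h (Icc (0:ℝ) π) := by
    apply continuousOn_pi.mpr
    exact hhc
  -- integrability of z
  have hzint : IntegrableOn (zf t h h' y y') (Icc (0:ℝ) π) := by
    apply Integrable.sub hy'int
    apply Integrable.add
    · exact ((hDc.smul hhcp).integrableOn_Icc : IntegrableOn (fun u => Df t h y u • h u) _)
    · exact hh'int.continuousOn_smul hFc isCompact_Icc
  have hzi : ∀ s : ℝ, ∀ i : Fin 2, zf t h h' y y' s i
      = y' s i - (Df t h y s * h s i + Ff t h y s * h' s i) := by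
    intro s i
    simp [zf, Pi.sub_apply, Pi.add_apply, Pi.smul_apply, smul_eq_mul]
  have hzFTC : ∀ x ∈ Icc (0:ℝ) π, ∀ i : Fin 2,
      ytil t h y x i = ytil t h y 0 i + ∫ s in (0:ℝ)..x, zf t h h' y y' s i := by
    intro x hx i
    have e := aux_prodFTC (f := Ff t h y) (g := fun u => h u i)
      (f' := Df t h y) (g' := fun u => h' u i) hDi (hI i) hFFTC
      (fun u hu => hhAC u hu i) hx
    have iDh : IntegrableOn (fun s => Df t h y s * h s i + Ff t h y s * h' s i)
        (Icc (0:ℝ) π) :=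
      ((hDc.mul (hhc i)).integrableOn_Icc).add
        (IntegrableOn.continuousOn_mul hFc (hI i) isCompact_Icc)
    have hzsplit : (∫ s in (0:ℝ)..x, zf t h h' y y' s i)
        = (∫ s in (0:ℝ)..x, y' s i)
          - ∫ s in (0:ℝ)..x, (Df t h y s * h s i + Ff t h y s * h' s i) := by
      rw [show (fun s => zf t h h' y y' s i)
        = fun s => y' s i - (Df t h y s * h s i + Ff t h y s * h' s i) from
          funext (fun s => hzi s i)]
      exact intervalIntegral.integral_sub (aux_II (hJ i) hx) (aux_II iDh hx)
    rw [ytil_eq, ytil_eq, hzsplit]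
    have hy' := hyAC x hx i
    linarith [e, hy']
  refine ⟨⟨zf t h h' y y', hzint, hzFTC, ?_⟩, ?_, ?_⟩
  · -- the ODE for ytil
    filter_upwards [ode_h, ode_y, ae_restrict_mem measurableSet_Icc] with x hx1 hx2 hxm
    obtain ⟨eh1, eh0⟩ := hx1
    obtain ⟨ey1, ey0⟩ := hx2
    have hθx : theta t h x ≠ 0 := hθne x hxm
    have hWx : h x 0 * y x 1 - h x 1 * y x 0 = (lam - mu) * Gf h y x := hWd x hxm
    funext i
    rw [show ytil t h y x = fun j => y x j - Ff t h y x * h x j from funext (ytil_eq t h y x)]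
    fin_cases i <;>
      simp only [OmatT, Omat, Bmat, Matrix.mulVec, dotProduct, Fin.sum_univ_two,
        Matrix.vecMulVec, Matrix.mul_apply, Matrix.add_apply, Matrix.smul_apply,
        Matrix.sub_apply, Matrix.cons_val_zero, Matrix.cons_val_one, Matrix.head_cons,
        Matrix.cons_val', Matrix.empty_val', Matrix.cons_val_fin_one, Matrix.head_fin_const,
        Pi.add_apply, Pi.sub_apply, Pi.smul_apply, smul_eq_mul, hzi, Matrix.of_apply,
        Fin.mk_zero, Fin.mk_one, Fin.isValue] <;>
      rw [eh1, eh0, ey1, ey0] <;>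
      simp only [Df, Ff]
    · linear_combination (-(rexp t - 1) / theta t h x * h x 0) * hWx
    · linear_combination (-(rexp t - 1) / theta t h x * h x 1) * hWx
  · funext i
    rw [ytil_eq, hF0]
    ring
  · intro hyπ hhπ
    rw [ytil_eq, hyπ, hhπ]
    ring
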